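/- Let X be a length space and I ⊆ ℝ a nondegenerate interval. Define d̄ on I × X by d̄((s,x),(t,y)) := ((s − t)² + d(x,y)²)^{1/2} (the distance of the Riemannian product metric dt² + σ). Then d̄ is a metric on I × X, and the identity map from (I × X, d̂_σ) to (I × X, d̄) is bi-Lipschitz; precisely, for all p, q ∈ I × X: d̂_σ(p,q) ≤ d̄(p,q) ≤ √2 · d̂_σ(p,q), where d̂_σ is the null distance of the Lorentzian product I × X. -/
import Mathlib

open MeasureTheory

/-- Causal relation of the warped product `I ×_f X`; for `f ≡ 1` it is the causal relation
of the Lorentzian product: `(s,x) ≼ (t,y)` iff `s ≤ t` and `d(x,y) ≤ t − s`. -/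
def WPCausal {X : Type*} [MetricSpace X] (f : ℝ → ℝ) (p q : ℝ × X) : Prop :=
  p.1 ≤ q.1 ∧
    ENNReal.ofReal (dist p.2 q.2) ≤ ∫⁻ u in Set.Ioc p.1 q.1, ENNReal.ofReal ((f u)⁻¹)

/-- `σ` is a piecewise causal chain with `n+1` segments from `p` to `q` inside `I × X`. -/
def WPChain {X : Type*} [MetricSpace X] (I : Set ℝ) (f : ℝ → ℝ) (p q : ℝ × X) (n : ℕ)
    (σ : ℕ → ℝ × X) : Prop :=
  σ 0 = p ∧ σ (n + 1) = q ∧ (∀ i ≤ n + 1, (σ i).1 ∈ I) ∧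
    ∀ i ≤ n, WPCausal f (σ i) (σ (i + 1)) ∨ WPCausal f (σ (i + 1)) (σ i)

/-- The null distance of the warped product `I ×_f X`. -/
noncomputable def nullDist {X : Type*} [MetricSpace X] (I : Set ℝ) (f : ℝ → ℝ)
    (p q : ℝ × X) : ℝ :=
  sInf { r | ∃ n σ, WPChain I f p q n σ ∧
    r = ∑ i ∈ Finset.range (n + 1), |(σ (i + 1)).1 - (σ i).1| }

/-- The distance of the Riemannian product `dt² + σ` on `ℝ × X`. -/
noncomputable def riemProdDist {X : Type*} [MetricSpace X] (p q : ℝ × X) : ℝ :=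
  Real.sqrt ((p.1 - q.1) ^ 2 + dist p.2 q.2 ^ 2)

lemma causal_one_iff {X : Type*} [MetricSpace X] (p q : ℝ × X) :
    WPCausal (fun _ => (1:ℝ)) p q ↔ p.1 ≤ q.1 ∧ dist p.2 q.2 ≤ q.1 - p.1 := by
  unfold WPCausal
  have hint : ∫⁻ _ in Set.Ioc p.1 q.1, ENNReal.ofReal ((1:ℝ)⁻¹)
      = ENNReal.ofReal (q.1 - p.1) := by
    rw [setLIntegral_const, Real.volume_Ioc]
    simp
  rw [hint]
  constructor
  · rintro ⟨h1, h2⟩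
    exact ⟨h1, (ENNReal.ofReal_le_ofReal_iff (by linarith)).1 h2⟩
  · rintro ⟨h1, h2⟩
    exact ⟨h1, ENNReal.ofReal_le_ofReal h2⟩

lemma causal_or {X : Type*} [MetricSpace X] (a b : ℝ × X) (h : dist a.2 b.2 ≤ |b.1 - a.1|) :
    WPCausal (fun _ => (1:ℝ)) a b ∨ WPCausal (fun _ => (1:ℝ)) b a := by
  rcases le_total a.1 b.1 with hle | hle
  · left; rw [causal_one_iff]
    exact ⟨hle, h.trans_eq (abs_of_nonneg (by linarith))⟩
  · right; rw [causal_one_iff]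
    refine ⟨hle, ?_⟩
    rw [dist_comm]
    calc dist a.2 b.2 ≤ |b.1 - a.1| := h
      _ = a.1 - b.1 := by rw [abs_sub_comm]; exact abs_of_nonneg (by linarith)

lemma nullDist_lb {X : Type*} [MetricSpace X] {I : Set ℝ} {p q : ℝ × X} {n : ℕ} {σ : ℕ → ℝ × X}
    (hσ : WPChain I (fun _ => (1:ℝ)) p q n σ) :
    max |q.1 - p.1| (dist p.2 q.2) ≤ ∑ i ∈ Finset.range (n+1), |(σ (i+1)).1 - (σ i).1| := by
  obtain ⟨h0, h1, -, hc⟩ := hσ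
  have step : ∀ i ≤ n, dist (σ i).2 (σ (i+1)).2 ≤ |(σ (i+1)).1 - (σ i).1| := by
    intro i hi
    rcases hc i hi with h | h
    · rw [causal_one_iff] at h
      exact h.2.trans (le_abs_self _)
    · rw [causal_one_iff] at h
      rw [dist_comm]
      calc dist (σ (i+1)).2 (σ i).2 ≤ (σ i).1 - (σ (i+1)).1 := h.2
        _ ≤ |(σ (i+1)).1 - (σ i).1| := by rw [abs_sub_comm]; exact le_abs_self _
  apply max_le
  · have : q.1 - p.1 = ∑ i ∈ Finset.range (n+1), ((σ (i+1)).1 - (σ i).1) := by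
      rw [Finset.sum_range_sub (fun i => (σ i).1)]
      rw [h0, h1]
    rw [this]
    exact Finset.abs_sum_le_sum_abs _ _
  · calc dist p.2 q.2 = dist (σ 0).2 (σ (n+1)).2 := by rw [h0, h1]
      _ ≤ ∑ i ∈ Finset.range (n+1), dist (σ i).2 (σ (i+1)).2 :=
          dist_le_range_sum_dist (fun i => (σ i).2) (n+1)
      _ ≤ ∑ i ∈ Finset.range (n+1), |(σ (i+1)).1 - (σ i).1| := by
          apply Finset.sum_le_sum
          intro i hi
          exact step i (by have := Finset.mem_range.1 hi; omega)

lemma chain_reverse {X : Type*} [MetricSpace X] {I : Set ℝ} {f : ℝ → ℝ} {p q : ℝ × X} {n : ℕ}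
    {σ : ℕ → ℝ × X} (h : WPChain I f p q n σ) :
    WPChain I f q p n (fun i => σ (n + 1 - i)) ∧
      ∑ i ∈ Finset.range (n+1), |(σ (n + 1 - (i+1))).1 - (σ (n + 1 - i)).1|
        = ∑ i ∈ Finset.range (n+1), |(σ (i+1)).1 - (σ i).1| := by
  obtain ⟨h0, h1, hI, hc⟩ := h
  constructor
  · refine ⟨by simpa using h1, by simpa using h0, fun i hi => hI _ (by omega), ?_⟩
    intro i hi
    have e1 : n + 1 - i = (n - i) + 1 := by omega
    have e2 : n + 1 - (i + 1) = n - i := by omega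
    show WPCausal f (σ (n+1-i)) (σ (n+1-(i+1))) ∨ WPCausal f (σ (n+1-(i+1))) (σ (n+1-i))
    rw [e1, e2]
    exact (hc (n - i) (by omega)).symm
  · rw [← Finset.sum_range_reflect (fun i => |(σ (i+1)).1 - (σ i).1|) (n+1)]
    apply Finset.sum_congr rfl
    intro j hj
    have hj' : j < n + 1 := Finset.mem_range.1 hj
    have e1 : n + 1 - (j+1) = n - j := by omega
    have e2 : n + 1 - j = (n - j) + 1 := by omega
    have e3 : n + 1 - 1 - j = n - j := by omega
    rw [e1, e2, e3, abs_sub_comm]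

lemma minkowski_aux (x1 y1 x2 y2 : ℝ) :
    Real.sqrt ((x1+x2)^2 + (y1+y2)^2)
      ≤ Real.sqrt (x1^2 + y1^2) + Real.sqrt (x2^2 + y2^2) := by
  set s1 := Real.sqrt (x1^2 + y1^2) with hs1
  set s2 := Real.sqrt (x2^2 + y2^2) with hs2
  have h1 : s1^2 = x1^2 + y1^2 := Real.sq_sqrt (by positivity)
  have h2 : s2^2 = x2^2 + y2^2 := Real.sq_sqrt (by positivity)
  have hn1 : 0 ≤ s1 := Real.sqrt_nonneg _
  have hn2 : 0 ≤ s2 := Real.sqrt_nonneg _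
  have key : x1*x2 + y1*y2 ≤ s1 * s2 := by
    rcases le_or_gt (x1*x2 + y1*y2) 0 with h | h
    · exact h.trans (by positivity)
    · have hprod : (s1*s2)^2 = (x1^2+y1^2)*(x2^2+y2^2) := by rw [mul_pow, h1, h2]
      nlinarith [sq_nonneg (x1*y2 - x2*y1), hprod, mul_nonneg hn1 hn2, h]
  calc Real.sqrt ((x1+x2)^2 + (y1+y2)^2) ≤ Real.sqrt ((s1 + s2)^2) := by
        apply Real.sqrt_le_sqrt; nlinarith
    _ = s1 + s2 := by rw [Real.sqrt_sq (by positivity)]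

lemma subdiv {X : Type*} [MetricSpace X]
    (hX : ∀ x y : X, ∀ ε : ℝ, 0 < ε →
      ∃ z : X, max (dist x z) (dist z y) ≤ dist x y / 2 + ε) :
    ∀ (k : ℕ) (x y : X) (ε : ℝ), 0 < ε → ∃ z : ℕ → X, z 0 = x ∧ z (2^k) = y ∧
      ∀ i < 2^k, dist (z i) (z (i+1)) ≤ dist x y / 2^k + ε := by
  intro k
  induction k with
  | zero =>
    intro x y ε hε
    refine ⟨fun i => if i = 0 then x else y, by simp, by simp, ?_⟩
    intro i hi
    interval_cases i
    simp
    linarith [dist_nonneg (x := x) (y := y)]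
  | succ k ih =>
    intro x y ε hε
    obtain ⟨w, hw⟩ := hX x y (ε * 2^k / 2) (by positivity)
    have hw1 : dist x w ≤ dist x y / 2 + ε * 2^k / 2 := (le_max_left _ _).trans hw
    have hw2 : dist w y ≤ dist x y / 2 + ε * 2^k / 2 := (le_max_right _ _).trans hw
    obtain ⟨z1, hz10, hz11, hz1s⟩ := ih x w (ε/2) (by positivity)
    obtain ⟨z2, hz20, hz21, hz2s⟩ := ih w y (ε/2) (by positivity)
    have hbound : ∀ d : ℝ, d ≤ dist x y / 2 + ε * 2^k / 2 →
        d / 2^k + ε/2 ≤ dist x y / 2^(k+1) + ε := by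
      intro d hd
      have h2k : (0:ℝ) < 2^k := by positivity
      have : d / 2^k ≤ (dist x y / 2 + ε * 2^k / 2) / 2^k := by gcongr
      calc d / 2^k + ε/2 ≤ (dist x y / 2 + ε * 2^k / 2) / 2^k + ε/2 := by linarith
        _ = dist x y / 2^(k+1) + ε := by
            rw [pow_succ]
            field_simp
            ring
    refine ⟨fun i => if i < 2^k then z1 i else z2 (i - 2^k), ?_, ?_, ?_⟩
    · have hp : (0:ℕ) < 2^k := by positivity
      simp [hp, hz10]
    · have : ¬ (2^(k+1) < 2^k) := by
        have := Nat.pow_lt_pow_succ (a := 2) (by norm_num) (n := k)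
        omega
      simp only [this, if_false]
      have : 2^(k+1) - 2^k = 2^k := by
        have : 2^(k+1) = 2^k + 2^k := by rw [pow_succ]; omega
        omega
      rw [this, hz21]
    · intro i hi
      have hpow : 2^(k+1) = 2^k + 2^k := by rw [pow_succ]; omega
      rcases lt_trichotomy (i+1) (2^k) with h | h | h
      · have hi1 : i < 2^k := by omega
        simp only [hi1, h, if_true]
        calc dist (z1 i) (z1 (i+1)) ≤ dist x w / 2^k + ε/2 := hz1s i hi1
          _ ≤ dist x y / 2^(k+1) + ε := hbound _ hw1
      · have hi1 : i < 2^k := by omega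
        have h2 : ¬ (i + 1 < 2^k) := by omega
        simp only [hi1, h2, if_true, if_false]
        have : i + 1 - 2^k = 0 := by omega
        rw [this, hz20, ← hz11, ← h]
        calc dist (z1 i) (z1 (i+1)) ≤ dist x w / 2^k + ε/2 := hz1s i hi1
          _ ≤ dist x y / 2^(k+1) + ε := hbound _ hw1
      · have hi1 : ¬ (i < 2^k) := by omega
        have h2 : ¬ (i + 1 < 2^k) := by omega
        simp only [hi1, h2, if_false]
        have e1 : i + 1 - 2^k = (i - 2^k) + 1 := by omega
        rw [e1]
        have : i - 2^k < 2^k := by omega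
        calc dist (z2 (i - 2^k)) (z2 (i - 2^k + 1)) ≤ dist w y / 2^k + ε/2 := hz2s _ this
          _ ≤ dist x y / 2^(k+1) + ε := hbound _ hw2

set_option maxHeartbeats 1000000 in
lemma exists_chain_zig {X : Type*} [MetricSpace X]
    (hX : ∀ x y : X, ∀ ε : ℝ, 0 < ε →
      ∃ z : X, max (dist x z) (dist z y) ≤ dist x y / 2 + ε)
    {I : Set ℝ} (hIc : I.OrdConnected) {a b : ℝ} (ha : a ∈ I) (hb : b ∈ I) (hab : a < b)
    (p q : ℝ × X) (hp : p.1 ∈ I) (hq : q.1 ∈ I) (hst : p.1 ≤ q.1)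
    (hDT : q.1 - p.1 < dist p.2 q.2) {ε : ℝ} (hε : 0 < ε) :
    ∃ n σ, WPChain I (fun _ => (1:ℝ)) p q n σ ∧
      ∑ i ∈ Finset.range (n+1), |(σ (i+1)).1 - (σ i).1| ≤ dist p.2 q.2 + ε := by
  set s := p.1 with hs
  set t := q.1 with ht
  set x := p.2 with hx
  set y := q.2 with hy
  set D := dist x y with hD
  set T := t - s with hT
  have hT0 : 0 ≤ T := by simp only [hT]; linarith
  have hD0 : 0 < D := lt_of_le_of_lt hT0 hDT
  set μ := min (ε/16) ((b-a)/16) with hμdef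
  have hμ : 0 < μ := lt_min (by linarith) (by linarith)
  have hμε : μ ≤ ε/16 := min_le_left _ _
  have hμba : μ ≤ (b-a)/16 := min_le_right _ _
  obtain ⟨k, hk⟩ := pow_unbounded_of_one_lt (D/μ) (by norm_num : (1:ℝ) < 2)
  have h2k : (0:ℝ) < 2^k := by positivity
  have hDk : D / 2^k < μ := by
    rw [div_lt_iff₀ h2k]
    have := (div_lt_iff₀ hμ).1 hk
    linarith [this]
  set ε₀ := μ / 2^k with hε₀def
  have hε₀ : 0 < ε₀ := by positivity
  set δ := D/2^k + 2*ε₀ with hδdef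
  have hδpos : 0 < δ := by positivity
  have h2kge1 : (1:ℝ) ≤ 2^k := one_le_pow₀ (by norm_num)
  have hε₀μ : ε₀ ≤ μ := by
    rw [hε₀def]; exact div_le_self hμ.le h2kge1
  have hδ3μ : δ ≤ 3*μ := by
    rw [hδdef]; linarith
  set m := 2^k with hmdef
  have hmcast : ((m:ℕ):ℝ) = 2^k := by rw [hmdef]; push_cast; ring
  have hm1 : 1 ≤ m := Nat.one_le_two_pow
  have hmδ : (m:ℝ)*δ = D + 2*μ := by
    rw [hmcast, hδdef, hε₀def]
    field_simp
    try ring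
  have hTmδ : T < (m:ℝ)*δ := by rw [hmδ]; linarith
  obtain ⟨z, hz0, hzm, hzs⟩ := subdiv hX k x y (2*ε₀) (by positivity)
  have hzs' : ∀ i < m, dist (z i) (z (i+1)) ≤ δ := by
    intro i hi
    rw [hδdef]
    exact hzs i hi
  set j := ⌊T/δ⌋₊ with hjdef
  have hjδ : (j:ℝ)*δ ≤ T := by
    rw [← le_div_iff₀ hδpos]
    exact Nat.floor_le (by positivity)
  have hTj : T < ((j:ℝ)+1)*δ := by
    have := Nat.lt_floor_add_one (T/δ)
    rw [← div_lt_iff₀ hδpos]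
    push_cast
    exact_mod_cast this
  have hjm : j < m := by
    rw [hjdef]
    rw [Nat.floor_lt (by positivity)]
    rw [div_lt_iff₀ hδpos]
    linarith
  set h := s + (j:ℝ)*δ with hhdef
  have hsh : s ≤ h := by
    have hj0 : 0 ≤ (j:ℝ)*δ := by positivity
    rw [hhdef]; linarith
  have hht : h ≤ t := by rw [hhdef]; rw [hT] at hjδ; linarith
  have hhI : h ∈ I := hIc.out hp hq ⟨hsh, hht⟩
  have hoex : ∃ o : ℝ, |o| = δ ∧ h + o ∈ I := by
    by_cases hio : h + δ ∈ I
    · exact ⟨δ, abs_of_pos hδpos, hio⟩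
    · refine ⟨-δ, by rw [abs_neg]; exact abs_of_pos hδpos, ?_⟩
      have hbh : b < h + δ := by
        by_contra hc
        push_neg at hc
        exact hio (hIc.out hhI hb ⟨by linarith, hc⟩)
      have h1 : a ≤ h + -δ := by linarith
      have h2 : h + -δ ≤ h := by linarith
      exact hIc.out ha hhI ⟨h1, h2⟩
  obtain ⟨o, ho_abs, hoI⟩ := hoex
  have hzm' : z m = y := hzm
  set e : ℕ → ℝ := fun i => if i ≤ j then s + (i:ℝ)*δ
      else if (i - j) % 2 = 1 then h + o else h with hedef
  clear_value s t x y D T μ ε₀ δ m j h e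
  have heA : ∀ i, i ≤ j → e i = s + (i:ℝ)*δ := by
    intro i hi; rw [hedef]; simp only; rw [if_pos hi]
  have heB : ∀ i, j < i → (i - j) % 2 = 1 → e i = h + o := by
    intro i hi hpar; rw [hedef]; simp only
    rw [if_neg (by omega), if_pos hpar]
  have heC : ∀ i, j < i → (i - j) % 2 = 0 → e i = h := by
    intro i hi hpar; rw [hedef]; simp only
    rw [if_neg (by omega), if_neg (by omega)]
  have hejh : e j = h := by rw [heA j le_rfl, hhdef]
  have he_diff : ∀ i, i < m → |e (i+1) - e i| = δ := by
    intro i him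
    rcases Nat.lt_or_ge i j with hij | hij
    · rw [heA i (by omega), heA (i+1) (by omega)]
      push_cast
      rw [show s + ((i:ℝ)+1)*δ - (s + (i:ℝ)*δ) = δ by ring]
      exact abs_of_pos hδpos
    · rcases Nat.eq_or_lt_of_le hij with hij' | hij'
      · rw [← hij']
        rw [hejh, heB (j+1) (by omega) (by omega)]
        rw [show h + o - h = o by ring]
        exact ho_abs
      · rcases Nat.even_or_odd (i - j) with hpar | hpar
        · have hp0 : (i - j) % 2 = 0 := Nat.even_iff.1 hpar
          have hp1 : (i + 1 - j) % 2 = 1 := by omega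
          rw [heC i hij' hp0, heB (i+1) (by omega) hp1]
          rw [show h + o - h = o by ring]
          exact ho_abs
        · have hp1 : (i - j) % 2 = 1 := Nat.odd_iff.1 hpar
          have hp0 : (i + 1 - j) % 2 = 0 := by omega
          rw [heB i hij' hp1, heC (i+1) (by omega) hp0]
          rw [show h - (h + o) = -o by ring, abs_neg]
          exact ho_abs
  have heI : ∀ i, e i ∈ I := by
    intro i
    rcases Nat.lt_or_ge j i with hij | hij
    · rcases Nat.even_or_odd (i - j) with hpar | hpar
      · rw [heC i hij (Nat.even_iff.1 hpar)]; exact hhI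
      · rw [heB i hij (Nat.odd_iff.1 hpar)]; exact hoI
    · rw [heA i hij]
      have hcast : (i:ℝ) ≤ (j:ℝ) := by exact_mod_cast hij
      have hmono : (i:ℝ)*δ ≤ (j:ℝ)*δ := mul_le_mul_of_nonneg_right hcast hδpos.le
      have hi0 : 0 ≤ (i:ℝ)*δ := by positivity
      have h1 : s ≤ s + (i:ℝ)*δ := by linarith
      have h2 : s + (i:ℝ)*δ ≤ t := by rw [hT] at hjδ; linarith
      exact hIc.out hp hq ⟨h1, h2⟩
  have hem : |t - e m| ≤ 2*δ := by
    have hth : |t - h| ≤ δ := by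
      rw [abs_of_nonneg (by linarith)]
      rw [hhdef]; rw [hT] at hTj; linarith
    rcases Nat.even_or_odd (m - j) with hpar | hpar
    · rw [heC m hjm (Nat.even_iff.1 hpar)]; linarith
    · rw [heB m hjm (Nat.odd_iff.1 hpar)]
      have hre : t - (h + o) = (t - h) + (-o) := by ring
      rw [hre]
      calc |(t - h) + -o| ≤ |t - h| + |(-o)| := abs_add_le _ _
        _ ≤ 2*δ := by rw [abs_neg, ho_abs]; linarith
  refine ⟨m, fun i => if i ≤ m then (e i, z i) else (t, y), ?_, ?_⟩
  · refine ⟨?_, ?_, ?_, ?_⟩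
    · simp only [if_pos (Nat.zero_le m)]
      rw [heA 0 (Nat.zero_le j), hz0]
      simp [hs, hx]
    · simp only [if_neg (by omega : ¬ m + 1 ≤ m)]
      simp [ht, hy]
    · intro i hi
      by_cases him : i ≤ m
      · simp only [if_pos him]; exact heI i
      · simp only [if_neg him]; exact hq
    · intro i hi
      apply causal_or
      by_cases him : i < m
      · simp only [if_pos (by omega : i ≤ m), if_pos (by omega : i + 1 ≤ m)]
        show dist (z i) (z (i+1)) ≤ |e (i+1) - e i|
        rw [he_diff i him]
        exact hzs' i him
      · have hieq : i = m := by omega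
        subst hieq
        simp only [if_pos (le_refl i), if_neg (by omega : ¬ i + 1 ≤ i)]
        simp only [hzm']
        rw [dist_self]
        exact abs_nonneg _
  · rw [Finset.sum_range_succ]
    have hlast : |((if m + 1 ≤ m then (e (m+1), z (m+1)) else (t, y)) : ℝ × X).1 -
        ((if m ≤ m then (e m, z m) else (t, y)) : ℝ × X).1| ≤ 2*δ := by
      simp only [if_neg (by omega : ¬ m + 1 ≤ m), if_pos (le_refl m)]
      exact hem
    have hmain : ∑ i ∈ Finset.range m,
        |((if i + 1 ≤ m then (e (i+1), z (i+1)) else (t, y)) : ℝ × X).1 -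
         ((if i ≤ m then (e i, z i) else (t, y)) : ℝ × X).1| = (m:ℝ) * δ := by
      rw [Finset.sum_congr rfl (g := fun _ => δ)]
      · rw [Finset.sum_const, Finset.card_range]; ring
      · intro i hi
        have him : i < m := Finset.mem_range.1 hi
        simp only [if_pos (by omega : i ≤ m), if_pos (by omega : i + 1 ≤ m)]
        exact he_diff i him
    calc _ ≤ (m:ℝ)*δ + 2*δ := by rw [← hmain]; exact add_le_add le_rfl hlast
      _ ≤ D + 2*μ + 6*μ := by rw [hmδ]; linarith
      _ ≤ D + ε := by linarith

lemma exists_chain {X : Type*} [MetricSpace X]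
    (hX : ∀ x y : X, ∀ ε : ℝ, 0 < ε →
      ∃ z : X, max (dist x z) (dist z y) ≤ dist x y / 2 + ε)
    {I : Set ℝ} (hIc : I.OrdConnected) {a b : ℝ} (ha : a ∈ I) (hb : b ∈ I) (hab : a < b)
    (p q : ℝ × X) (hp : p.1 ∈ I) (hq : q.1 ∈ I) {ε : ℝ} (hε : 0 < ε) :
    ∃ n σ, WPChain I (fun _ => (1:ℝ)) p q n σ ∧
      ∑ i ∈ Finset.range (n+1), |(σ (i+1)).1 - (σ i).1|
        ≤ max |q.1 - p.1| (dist p.2 q.2) + ε := by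
  by_cases hcase : dist p.2 q.2 ≤ |q.1 - p.1|
  · refine ⟨0, fun i => if i = 0 then p else q, ⟨rfl, rfl, ?_, ?_⟩, ?_⟩
    · intro i hi
      interval_cases i
      · exact hp
      · exact hq
    · intro i hi
      interval_cases i
      simp only [if_pos rfl, if_neg (by omega : ¬ (0:ℕ) + 1 = 0)]
      exact causal_or p q hcase
    · simp only [zero_add, Finset.range_one, Finset.sum_singleton]
      norm_num
      have h1 : |q.1 - p.1| ≤ max |q.1 - p.1| (dist p.2 q.2) := le_max_left _ _
      linarith
  · push_neg at hcase
    rcases le_total p.1 q.1 with hst | hst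
    · have hDT : q.1 - p.1 < dist p.2 q.2 := by
        calc q.1 - p.1 ≤ |q.1 - p.1| := le_abs_self _
          _ < dist p.2 q.2 := hcase
      obtain ⟨n, σ, hσ, hsum⟩ := exists_chain_zig hX hIc ha hb hab p q hp hq hst hDT hε
      refine ⟨n, σ, hσ, hsum.trans ?_⟩
      have : dist p.2 q.2 ≤ max |q.1 - p.1| (dist p.2 q.2) := le_max_right _ _
      linarith
    · have hDT : p.1 - q.1 < dist q.2 p.2 := by
        rw [dist_comm]
        calc p.1 - q.1 ≤ |q.1 - p.1| := by rw [abs_sub_comm]; exact le_abs_self _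
          _ < dist p.2 q.2 := hcase
      obtain ⟨n, σ, hσ, hsum⟩ := exists_chain_zig hX hIc ha hb hab q p hq hp hst hDT hε
      obtain ⟨hσ', hsum'⟩ := chain_reverse hσ
      refine ⟨n, fun i => σ (n + 1 - i), hσ', ?_⟩
      calc ∑ i ∈ Finset.range (n+1), |(σ (n + 1 - (i+1))).1 - (σ (n + 1 - i)).1|
          = ∑ i ∈ Finset.range (n+1), |(σ (i+1)).1 - (σ i).1| := hsum'
        _ ≤ dist q.2 p.2 + ε := hsum
        _ ≤ max |q.1 - p.1| (dist p.2 q.2) + ε := by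
            rw [dist_comm]
            have : dist p.2 q.2 ≤ max |q.1 - p.1| (dist p.2 q.2) := le_max_right _ _
            linarith

/-- on a length space `X` and nondegenerate interval `I`, the Pythagorean
product distance `d̄` is a metric on `I × X` and the identity map is bi-Lipschitz between
the null distance `d̂_σ` of the Lorentzian product and `d̄`:
`d̂_σ ≤ d̄ ≤ √2 · d̂_σ`. -/
theorem stmt4 {X : Type*} [MetricSpace X]
    (hX : ∀ x y : X, ∀ ε : ℝ, 0 < ε →
      ∃ z : X, max (dist x z) (dist z y) ≤ dist x y / 2 + ε)
    (I : Set ℝ) (hIc : I.OrdConnected) (hInd : ∃ a ∈ I, ∃ b ∈ I, a < b) :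
    (∀ p q : ℝ × X, p.1 ∈ I → q.1 ∈ I →
      (riemProdDist p q = 0 ↔ p = q)) ∧
    (∀ p q : ℝ × X, p.1 ∈ I → q.1 ∈ I →
      riemProdDist p q = riemProdDist q p) ∧
    (∀ p q r : ℝ × X, p.1 ∈ I → q.1 ∈ I → r.1 ∈ I →
      riemProdDist p r ≤ riemProdDist p q + riemProdDist q r) ∧
    (∀ p q : ℝ × X, p.1 ∈ I → q.1 ∈ I →
      nullDist I (fun _ => (1 : ℝ)) p q ≤ riemProdDist p q ∧
      riemProdDist p q ≤ Real.sqrt 2 * nullDist I (fun _ => (1 : ℝ)) p q) := by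
  obtain ⟨a, ha, b, hb, hab⟩ := hInd
  refine ⟨?_, ?_, ?_, ?_⟩
  · -- definiteness
    intro p q hp hq
    unfold riemProdDist
    constructor
    · intro hz
      have harg : (p.1 - q.1)^2 + dist p.2 q.2 ^ 2 ≤ 0 := by
        by_contra hc
        push_neg at hc
        have := Real.sqrt_pos.2 hc
        linarith
      have h1 : p.1 = q.1 := by nlinarith [sq_nonneg (p.1 - q.1), sq_nonneg (dist p.2 q.2)]
      have h2 : dist p.2 q.2 = 0 := by nlinarith [sq_nonneg (p.1 - q.1), sq_nonneg (dist p.2 q.2), dist_nonneg (x := p.2) (y := q.2)]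
      exact Prod.ext h1 (dist_eq_zero.1 h2)
    · intro hpq
      subst hpq
      simp
  · -- symmetry
    intro p q hp hq
    unfold riemProdDist
    rw [dist_comm, show (p.1 - q.1)^2 = (q.1 - p.1)^2 by ring]
  · -- triangle
    intro p q r hp hq hr
    unfold riemProdDist
    calc Real.sqrt ((p.1 - r.1)^2 + dist p.2 r.2 ^ 2)
        ≤ Real.sqrt (((p.1 - q.1) + (q.1 - r.1))^2 + (dist p.2 q.2 + dist q.2 r.2)^2) := by
          apply Real.sqrt_le_sqrt
          have h1 : dist p.2 r.2 ≤ dist p.2 q.2 + dist q.2 r.2 := dist_triangle _ _ _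
          have h2 : dist p.2 r.2 ^ 2 ≤ (dist p.2 q.2 + dist q.2 r.2)^2 := by
            apply pow_le_pow_left₀ dist_nonneg h1
          have h3 : ((p.1 - q.1) + (q.1 - r.1))^2 = (p.1 - r.1)^2 := by ring
          linarith
      _ ≤ _ := minkowski_aux _ _ _ _
  · -- bi-Lipschitz
    intro p q hp hq
    set S := { r | ∃ n σ, WPChain I (fun _ => (1:ℝ)) p q n σ ∧
      r = ∑ i ∈ Finset.range (n + 1), |(σ (i + 1)).1 - (σ i).1| } with hSdef
    have hND : nullDist I (fun _ => (1:ℝ)) p q = sInf S := rfl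
    set M := max |q.1 - p.1| (dist p.2 q.2) with hMdef
    have hM0 : 0 ≤ M := le_trans (abs_nonneg _) (le_max_left _ _)
    have hSne : S.Nonempty := by
      obtain ⟨n, σ, hσ, -⟩ := exists_chain hX hIc ha hb hab p q hp hq (ε := 1) one_pos
      exact ⟨_, n, σ, hσ, rfl⟩
    have hSbdd : BddBelow S := by
      refine ⟨0, ?_⟩
      rintro r ⟨n, σ, hσ, rfl⟩
      exact Finset.sum_nonneg fun i _ => abs_nonneg _
    have hlow : M ≤ sInf S := by
      apply le_csInf hSne
      rintro r ⟨n, σ, hσ, rfl⟩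
      exact nullDist_lb hσ
    have hup : sInf S ≤ M := by
      apply le_of_forall_pos_le_add
      intro ε hε
      obtain ⟨n, σ, hσ, hsum⟩ := exists_chain hX hIc ha hb hab p q hp hq hε
      exact le_trans (csInf_le hSbdd ⟨n, σ, hσ, rfl⟩) hsum
    have hNM : nullDist I (fun _ => (1:ℝ)) p q = M := by
      rw [hND]; exact le_antisymm hup hlow
    have hRM1 : M ≤ riemProdDist p q := by
      unfold riemProdDist
      apply max_le
      · rw [show (p.1 - q.1)^2 = |q.1 - p.1|^2 by rw [abs_sub_comm, sq_abs]]
        calc |q.1 - p.1| = Real.sqrt (|q.1 - p.1|^2) := (Real.sqrt_sq (abs_nonneg _)).symm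
          _ ≤ _ := Real.sqrt_le_sqrt (by nlinarith [sq_nonneg (dist p.2 q.2)])
      · calc dist p.2 q.2 = Real.sqrt (dist p.2 q.2 ^ 2) := (Real.sqrt_sq dist_nonneg).symm
          _ ≤ _ := Real.sqrt_le_sqrt (by nlinarith [sq_nonneg (p.1 - q.1)])
    have hRM2 : riemProdDist p q ≤ Real.sqrt 2 * M := by
      unfold riemProdDist
      have hTM : |q.1 - p.1| ≤ M := le_max_left _ _
      have hDM : dist p.2 q.2 ≤ M := le_max_right _ _
      calc Real.sqrt ((p.1 - q.1)^2 + dist p.2 q.2 ^ 2) ≤ Real.sqrt (2 * M^2) := by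
            apply Real.sqrt_le_sqrt
            have h1 : (p.1 - q.1)^2 ≤ M^2 := by
              rw [show (p.1 - q.1)^2 = |q.1 - p.1|^2 by rw [abs_sub_comm, sq_abs]]
              exact pow_le_pow_left₀ (abs_nonneg _) hTM 2
            have h2 : dist p.2 q.2 ^ 2 ≤ M^2 := pow_le_pow_left₀ dist_nonneg hDM 2
            linarith
        _ = Real.sqrt 2 * M := by
            rw [Real.sqrt_mul (by norm_num), Real.sqrt_sq hM0]
    rw [hNM]
    exact ⟨hRM1, hRM2⟩
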